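/- (Lemma 1) In any SPIR scheme on a graph G satisfying the system model: for any subsets 𝒥, 𝒦 ⊆ [K], any server n ∈ [N], and any message indices k, k' ∈ [K], the conditional entropies of the answers agree: H(A_n^{[k]} | W_𝒥, R_𝒦, Q_n^{[k]}) = H(A_n^{[k']} | W_𝒥, R_𝒦, Q_n^{[k']}). -/
import Mathlib


open Finset

noncomputable section

namespace SPIR

variable {Ω : Type} [Fintype Ω]

/-- Probability of an event under the probability mass function `μ`
on the finite sample space `Ω`. -/
def pr (μ : Ω → ℝ) (E : Set Ω) : ℝ := ∑ ω, E.indicator μ ω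

/-- Shannon entropy of the random variable `X`, measured in `q`-ary units. -/
def ent (q : ℕ) (μ : Ω → ℝ) {α : Type*} (X : Ω → α) : ℝ :=
  -∑ ω, μ ω * Real.logb q (pr μ {ω' | X ω' = X ω})

/-- Conditional Shannon entropy `H(X | Y)` in `q`-ary units. -/
def condEnt (q : ℕ) (μ : Ω → ℝ) {α β : Type*} (X : Ω → α) (Y : Ω → β) : ℝ :=
  ent q μ (fun ω => (X ω, Y ω)) - ent q μ Y

/-- Mutual information `I(X ; Y)` in `q`-ary units. -/
def mutInf (q : ℕ) (μ : Ω → ℝ) {α β : Type*} (X : Ω → α) (Y : Ω → β) : ℝ :=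
  ent q μ X + ent q μ Y - ent q μ (fun ω => (X ω, Y ω))

/-- Two random variables have the same (joint) distribution. -/
def IdentDist (μ : Ω → ℝ) {α : Type*} (X Y : Ω → α) : Prop :=
  ∀ s : Set α, pr μ (X ⁻¹' s) = pr μ (Y ⁻¹' s)

/-- Independence of two random variables. -/
def IndepRV (μ : Ω → ℝ) {α β : Type*} (X : Ω → α) (Y : Ω → β) : Prop :=
  ∀ (s : Set α) (t : Set β),
    pr μ (X ⁻¹' s ∩ Y ⁻¹' t) = pr μ (X ⁻¹' s) * pr μ (Y ⁻¹' t)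

/-- A symmetric private information retrieval (SPIR) scheme on a graph-replicated
database, following the system model:  `N` servers are the vertices of a simple graph
whose `K` edges are messages; message `W k` (uniform on `F^L`) and the message-specific
common randomness `R k` are stored exactly at the two endpoints `e1 k`, `e2 k` of
edge `k`.  All Shannon quantities are in `q`-ary units, `q = |F|`. -/
structure Scheme (q N K L : ℕ) (F : Type) [Field F] [Fintype F]
    (Ω : Type) [Fintype Ω] where
  /-- the underlying probability mass function -/
  μ : Ω → ℝ
  μ_nonneg : ∀ ω, 0 ≤ μ ω
  μ_sum : ∑ ω, μ ω = 1
  card_F : Fintype.card F = q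
  /-- first endpoint of each edge (message) -/
  e1 : Fin K → Fin N
  /-- second endpoint of each edge (message) -/
  e2 : Fin K → Fin N
  edge_ne : ∀ k, e1 k ≠ e2 k
  /-- the graph is simple: distinct edges have distinct endpoint sets -/
  edge_inj : ∀ k k', ({e1 k, e2 k} : Set (Fin N)) = {e1 k', e2 k'} → k = k'
  /-- alphabet of the queries -/
  QT : Type
  /-- alphabet of the answers -/
  AT : Type
  /-- alphabet of the common randomness -/
  RT : Type
  /-- alphabet of the user's query randomness -/
  UT : Type
  /-- the messages -/
  W : Fin K → Ω → Fin L → F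
  /-- the message-specific common randomness -/
  R : Fin K → Ω → RT
  /-- the user's query randomness `𝒬` -/
  U : Ω → UT
  /-- `Q n k` : query sent to server `n` when the desired message index is `k` -/
  Q : Fin N → Fin K → Ω → QT
  /-- `A n k` : answer of server `n` when the desired message index is `k` -/
  A : Fin N → Fin K → Ω → AT
  /-- the messages are jointly independent, each uniform on `F^L` -/
  W_unif : ∀ w : Fin K → Fin L → F,
    pr μ {ω | (fun k => W k ω) = w} = (1 / (q : ℝ) ^ L) ^ K
  /-- the common randomness variables are jointly independent of each other and of the
  messages -/
  R_indep : ∀ (s : Fin K → Set RT) (t : Set (Fin K → Fin L → F)),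
    pr μ {ω | (fun k => W k ω) ∈ t ∧ ∀ k, R k ω ∈ s k}
      = pr μ {ω | (fun k => W k ω) ∈ t} * ∏ k, pr μ {ω | R k ω ∈ s k}
  /-- the common randomness variables are identically distributed -/
  R_ident : ∀ k k', IdentDist μ (R k) (R k')
  /-- the user's query randomness is independent of `(𝒲, ℛ)` -/
  U_indep : IndepRV μ U (fun ω => (fun k => W k ω, fun k => R k ω))
  /-- the queries are a deterministic function of `𝒬` -/
  query_det : ∀ k, condEnt q μ (fun ω (n : Fin N) => Q n k ω) U = 0
  /-- the answer of a server is a deterministic function of its query, its stored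
  messages `𝒲ₙ` and its stored randomness `ℛₙ` -/
  answer_det : ∀ n k, condEnt q μ (A n k)
    (fun ω => (Q n k ω,
      fun j : {j : Fin K // e1 j = n ∨ e2 j = n} => W j ω,
      fun j : {j : Fin K // e1 j = n ∨ e2 j = n} => R j ω)) = 0
  /-- user privacy: `(Qₙ^[k], Aₙ^[k], 𝒲ₙ, ℛₙ)` has the same distribution for all `k` -/
  user_privacy : ∀ (n : Fin N) (k k' : Fin K), IdentDist μ
    (fun ω => (Q n k ω, A n k ω,
      fun j : {j : Fin K // e1 j = n ∨ e2 j = n} => W j ω,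
      fun j : {j : Fin K // e1 j = n ∨ e2 j = n} => R j ω))
    (fun ω => (Q n k' ω, A n k' ω,
      fun j : {j : Fin K // e1 j = n ∨ e2 j = n} => W j ω,
      fun j : {j : Fin K // e1 j = n ∨ e2 j = n} => R j ω))
  /-- reliability: the desired message is recovered from all answers and `𝒬` -/
  reliability : ∀ k, condEnt q μ (W k)
    (fun ω => (fun n : Fin N => A n k ω, U ω)) = 0
  /-- database privacy -/
  db_privacy : ∀ (k : Fin K) (J : Set (Fin K)), k ∉ J →
    mutInf q μ (fun ω => fun j : J => W j ω)
      (fun ω => (fun n : Fin N => A n k ω,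
        fun n : Fin N => Q n k ω,
        fun ℓ : {ℓ : Fin K // ℓ ∉ J} => R ℓ ω,
        fun ℓ : {ℓ : Fin K // ℓ ∉ J ∧ ℓ ≠ k} => W ℓ ω,
        U ω)) = 0
  /-- randomness recoverability at each server storing `R j` -/
  rand_recov : ∀ (k j : Fin K) (n : Fin N), (e1 j = n ∨ e2 j = n) →
    condEnt q μ (R j)
      (fun ω => (A n k ω,
        fun m : {m : Fin K // e1 m = n ∨ e2 m = n} => W m ω,
        fun m : {m : Fin K // (e1 m = n ∨ e2 m = n) ∧ m ≠ j} => R m ω,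
        Q n k ω)) = 0

/-- The simple graph underlying an SPIR scheme. -/
def schemeGraph {q N K L : ℕ} {F : Type} [Field F] [Fintype F]
    {Ω : Type} [Fintype Ω] (S : Scheme q N K L F Ω) : SimpleGraph (Fin N) :=
  SimpleGraph.fromRel (fun i j => ∃ k, S.e1 k = i ∧ S.e2 k = j)


/-! ### Auxiliary probability lemmas -/

section Aux

open scoped Classical

variable {Ω : Type} [Fintype Ω] {μ : Ω → ℝ}

lemma pr_eq_sum_filter (μ : Ω → ℝ) (E : Set Ω) :
    pr μ E = ∑ ω ∈ Finset.univ.filter (fun ω => ω ∈ E), μ ω := by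
  classical
  rw [pr, Finset.sum_filter]
  exact Finset.sum_congr rfl fun ω _ => by simp [Set.indicator_apply]

lemma pr_nonneg (hμ : ∀ ω, 0 ≤ μ ω) (E : Set Ω) : 0 ≤ pr μ E :=
  Finset.sum_nonneg fun ω _ => Set.indicator_nonneg (fun ω _ => hμ ω) ω

lemma pr_mono (hμ : ∀ ω, 0 ≤ μ ω) {E E' : Set Ω} (h : E ⊆ E') : pr μ E ≤ pr μ E' := by
  classical
  rw [pr_eq_sum_filter, pr_eq_sum_filter]
  apply Finset.sum_le_sum_of_subset_of_nonneg
  · intro ω hω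
    simp only [Finset.mem_filter, Finset.mem_univ, true_and] at *
    exact h hω
  · intro ω _ _
    exact hμ ω

lemma pr_univ (hsum : ∑ ω, μ ω = 1) : pr μ Set.univ = 1 := by
  rw [pr]; simpa using hsum

lemma le_pr (hμ : ∀ ω, 0 ≤ μ ω) {E : Set Ω} {ω₀ : Ω} (h : ω₀ ∈ E) : μ ω₀ ≤ pr μ E := by
  classical
  rw [pr_eq_sum_filter]
  exact Finset.single_le_sum (fun ω _ => hμ ω) (by simp [h])

lemma pr_congr (hμ : ∀ ω, 0 ≤ μ ω) {E E' : Set Ω}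
    (h : ∀ ω, 0 < μ ω → (ω ∈ E ↔ ω ∈ E')) : pr μ E = pr μ E' := by
  classical
  rw [pr, pr]
  refine Finset.sum_congr rfl fun ω _ => ?_
  rcases eq_or_lt_of_le (hμ ω) with h0 | h0
  · have h0' : μ ω = 0 := h0.symm
    simp [Set.indicator_apply, h0']
  · simp [Set.indicator_apply, h ω h0]

lemma exists_pos_weight (hμ : ∀ ω, 0 ≤ μ ω) (hsum : ∑ ω, μ ω = 1) : ∃ ω, 0 < μ ω := by
  by_contra h
  push_neg at h
  have : ∑ ω, μ ω ≤ 0 := Finset.sum_nonpos fun ω _ => h ω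
  linarith

lemma sum_mul_comp {α : Type*} (X : Ω → α) (g : α → ℝ) (T : Finset α)
    (hT : ∀ ω, X ω ∈ T) :
    ∑ ω, μ ω * g (X ω) = ∑ x ∈ T, pr μ {ω | X ω = x} * g x := by
  classical
  rw [← Finset.sum_fiberwise_of_maps_to (g := X) (fun ω _ => hT ω)
    (f := fun ω => μ ω * g (X ω))]
  refine Finset.sum_congr rfl fun x _ => ?_
  rw [pr_eq_sum_filter, Finset.sum_mul]
  refine Finset.sum_congr (by ext ω; simp) fun ω hω => ?_
  simp only [Finset.mem_filter] at hω
  rw [hω.2]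

lemma pr_preimage_eq_sum {α : Type*} (X : Ω → α) (s : Set α) (T : Finset α)
    (hT : ∀ ω, X ω ∈ T) :
    pr μ (X ⁻¹' s) = ∑ x ∈ T, if x ∈ s then pr μ {ω | X ω = x} else 0 := by
  classical
  have h1 : pr μ (X ⁻¹' s) = ∑ ω, μ ω * (fun x => if x ∈ s then (1:ℝ) else 0) (X ω) := by
    rw [pr]
    refine Finset.sum_congr rfl fun ω _ => ?_
    by_cases h : X ω ∈ s <;> simp [Set.indicator_apply, Set.mem_preimage, h]
  rw [h1, sum_mul_comp X (fun x => if x ∈ s then (1:ℝ) else 0) T hT]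
  refine Finset.sum_congr rfl fun x _ => ?_
  by_cases h : x ∈ s <;> simp [h]

lemma identDist_iff_pmf {α : Type*} {X Y : Ω → α} :
    IdentDist μ X Y ↔ ∀ x, pr μ {ω | X ω = x} = pr μ {ω | Y ω = x} := by
  constructor
  · intro h x
    have hx := h {x}
    have e1 : X ⁻¹' {x} = {ω | X ω = x} := by ext ω; simp
    have e2 : Y ⁻¹' {x} = {ω | Y ω = x} := by ext ω; simp
    rwa [e1, e2] at hx
  · intro h s
    classical
    set T := Finset.image X Finset.univ ∪ Finset.image Y Finset.univ with hT
    rw [pr_preimage_eq_sum X s T (fun ω => by simp [hT]),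
        pr_preimage_eq_sum Y s T (fun ω => by simp [hT])]
    exact Finset.sum_congr rfl fun x _ => by rw [h x]

lemma ent_congr {α : Type*} {X Y : Ω → α} (q : ℕ) (h : IdentDist μ X Y) :
    ent q μ X = ent q μ Y := by
  classical
  set T := Finset.image X Finset.univ ∪ Finset.image Y Finset.univ with hT
  have hp := identDist_iff_pmf.mp h
  have h1 : ent q μ X
      = -∑ x ∈ T, pr μ {ω | X ω = x} * Real.logb q (pr μ {ω' | X ω' = x}) := by
    rw [ent]
    congr 1
    exact sum_mul_comp X (fun x => Real.logb q (pr μ {ω' | X ω' = x})) T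
      (fun ω => by simp [hT])
  have h2 : ent q μ Y
      = -∑ x ∈ T, pr μ {ω | Y ω = x} * Real.logb q (pr μ {ω' | Y ω' = x}) := by
    rw [ent]
    congr 1
    exact sum_mul_comp Y (fun x => Real.logb q (pr μ {ω' | Y ω' = x})) T
      (fun ω => by simp [hT])
  rw [h1, h2]
  congr 1
  exact Finset.sum_congr rfl fun x _ => by rw [hp x]

lemma identDist_comp {α β : Type*} {X Y : Ω → α} (h : IdentDist μ X Y) (f : α → β) :
    IdentDist μ (fun ω => f (X ω)) (fun ω => f (Y ω)) :=
  fun s => h (f ⁻¹' s)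

lemma condEnt_congr {α β : Type*} {X X' : Ω → α} {Y Y' : Ω → β} (q : ℕ)
    (h : IdentDist μ (fun ω => (X ω, Y ω)) (fun ω => (X' ω, Y' ω))) :
    condEnt q μ X Y = condEnt q μ X' Y' := by
  have h1 : ent q μ (fun ω => (X ω, Y ω)) = ent q μ (fun ω => (X' ω, Y' ω)) :=
    ent_congr q h
  have h2 : ent q μ Y = ent q μ Y' := ent_congr q (identDist_comp h Prod.snd)
  rw [condEnt, condEnt, h1, h2]

lemma det_of_condEnt_zero {α β : Type*} {q : ℕ} (hq : 1 < (q : ℝ))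
    (hμ : ∀ ω, 0 ≤ μ ω) {X : Ω → α} {Y : Ω → β}
    (h : condEnt q μ X Y = 0) :
    ∀ ω ω', 0 < μ ω → 0 < μ ω' → Y ω = Y ω' → X ω = X ω' := by
  classical
  set p2 : Ω → ℝ := fun ω => pr μ {ω' | (X ω', Y ω') = (X ω, Y ω)} with hp2
  set p1 : Ω → ℝ := fun ω => pr μ {ω' | Y ω' = Y ω} with hp1
  have hle : ∀ ω, p2 ω ≤ p1 ω := by
    intro ω
    refine pr_mono hμ fun ω' hω' => ?_
    simp only [Set.mem_setOf_eq, Prod.mk.injEq] at *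
    exact hω'.2
  have hμle : ∀ ω, μ ω ≤ p2 ω := fun ω => le_pr hμ rfl
  have hform : condEnt q μ X Y
      = ∑ ω, μ ω * (Real.logb q (p1 ω) - Real.logb q (p2 ω)) := by
    simp only [condEnt, ent, mul_sub, Finset.sum_sub_distrib]
    ring
  have hterm : ∀ ω ∈ Finset.univ, 0 ≤ μ ω * (Real.logb q (p1 ω) - Real.logb q (p2 ω)) := by
    intro ω _
    rcases eq_or_lt_of_le (hμ ω) with h0 | h0
    · rw [← h0]; simp
    · have hp2pos : 0 < p2 ω := lt_of_lt_of_le h0 (hμle ω)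
      have := Real.logb_le_logb_of_le hq hp2pos (hle ω)
      have hsub : 0 ≤ Real.logb q (p1 ω) - Real.logb q (p2 ω) := by linarith
      exact mul_nonneg (le_of_lt h0) hsub
  have hzero : ∀ ω, 0 < μ ω → p1 ω = p2 ω := by
    intro ω hω
    have hsum0 : ∑ ω, μ ω * (Real.logb q (p1 ω) - Real.logb q (p2 ω)) = 0 := by
      rw [← hform, h]
    have := (Finset.sum_eq_zero_iff_of_nonneg hterm).mp hsum0 ω (Finset.mem_univ ω)
    have hdiff : Real.logb q (p1 ω) - Real.logb q (p2 ω) = 0 := by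
      rcases mul_eq_zero.mp this with h' | h'
      · exact absurd h' (ne_of_gt hω)
      · exact h'
    have hp2pos : 0 < p2 ω := lt_of_lt_of_le hω (hμle ω)
    by_contra hne
    have hlt : p2 ω < p1 ω := lt_of_le_of_ne (hle ω) (Ne.symm hne)
    have := Real.logb_lt_logb hq hp2pos hlt
    linarith
  intro ω ω' hω hω' hY
  by_contra hX
  have hD : ({ω'' | Y ω'' = Y ω'} : Set Ω) = {ω'' | Y ω'' = Y ω} := by rw [hY]
  have hE : pr μ {ω'' | (X ω'', Y ω'') = (X ω, Y ω)} = p1 ω := (hzero ω hω).symm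
  have hE' : pr μ {ω'' | (X ω'', Y ω'') = (X ω', Y ω')} = p1 ω := by
    have h1 : pr μ {ω'' | Y ω'' = Y ω'}
        = pr μ {ω'' | (X ω'', Y ω'') = (X ω', Y ω')} := hzero ω' hω'
    show _ = pr μ {ω'' | Y ω'' = Y ω}
    rw [← h1, hD]
  have hsumle : pr μ {ω'' | (X ω'', Y ω'') = (X ω, Y ω)}
      + pr μ {ω'' | (X ω'', Y ω'') = (X ω', Y ω')} ≤ p1 ω := by
    show _ ≤ pr μ {ω'' | Y ω'' = Y ω}
    rw [pr, pr, pr, ← Finset.sum_add_distrib]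
    refine Finset.sum_le_sum fun ω'' _ => ?_
    simp only [Set.indicator_apply, Set.mem_setOf_eq]
    by_cases h1 : (X ω'', Y ω'') = (X ω, Y ω)
    · have h2 : ¬ (X ω'', Y ω'') = (X ω', Y ω') := fun h2 =>
        hX (congrArg Prod.fst (h1.symm.trans h2))
      have hY'' : Y ω'' = Y ω := congrArg Prod.snd h1
      rw [if_pos h1, if_neg h2, if_pos hY'']
      linarith
    · by_cases h2 : (X ω'', Y ω'') = (X ω', Y ω')
      · have hY'' : Y ω'' = Y ω := (congrArg Prod.snd h2).trans hY.symm
        rw [if_pos h2, if_neg h1, if_pos hY'']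
        linarith
      · rw [if_neg h1, if_neg h2]
        by_cases h3 : Y ω'' = Y ω
        · rw [if_pos h3]; linarith [hμ ω'']
        · rw [if_neg h3]; linarith
  rw [hE, hE'] at hsumle
  have hpos : 0 < p1 ω := lt_of_lt_of_le hω (le_trans (hμle ω) (hle ω))
  linarith

lemma indepRV_of_det {α β γ : Type*} (hμ : ∀ ω, 0 ≤ μ ω) (hsum : ∑ ω, μ ω = 1)
    {V : Ω → α} {Y : Ω → β} {X : Ω → γ}
    (hind : IndepRV μ V Y)
    (hdet : ∀ ω ω', 0 < μ ω → 0 < μ ω' → V ω = V ω' → X ω = X ω') :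
    IndepRV μ X Y := by
  classical
  obtain ⟨ω₀, hω₀⟩ := exists_pos_weight hμ hsum
  have main : ∃ φ : α → γ, ∀ ω, 0 < μ ω → X ω = φ (V ω) := by
    refine ⟨fun v => if h : ∃ ω, 0 < μ ω ∧ V ω = v then X h.choose else X ω₀,
      fun ω hω => ?_⟩
    have hex : ∃ ω', 0 < μ ω' ∧ V ω' = V ω := ⟨ω, hω, rfl⟩
    simp only [dif_pos hex]
    exact hdet ω hex.choose hω hex.choose_spec.1 hex.choose_spec.2.symm
  obtain ⟨φ, hXφ⟩ := main
  intro s t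
  have e1 : pr μ (X ⁻¹' s ∩ Y ⁻¹' t) = pr μ (V ⁻¹' (φ ⁻¹' s) ∩ Y ⁻¹' t) :=
    pr_congr hμ fun ω hω => by
      simp only [Set.mem_inter_iff, Set.mem_preimage, hXφ ω hω]
  have e2 : pr μ (X ⁻¹' s) = pr μ (V ⁻¹' (φ ⁻¹' s)) :=
    pr_congr hμ fun ω hω => by
      simp only [Set.mem_preimage, hXφ ω hω]
  rw [e1, hind (φ ⁻¹' s) t, ← e2]

lemma indepRV_of_pmf {α β : Type*} {V : Ω → α} {Y : Ω → β}
    (h : ∀ v y, pr μ {ω | V ω = v ∧ Y ω = y}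
        = pr μ {ω | V ω = v} * pr μ {ω | Y ω = y}) :
    IndepRV μ V Y := by
  classical
  intro s t
  set T1 := Finset.image V Finset.univ with hT1
  set T2 := Finset.image Y Finset.univ with hT2
  have hpre : V ⁻¹' s ∩ Y ⁻¹' t = (fun ω => (V ω, Y ω)) ⁻¹' (s ×ˢ t) := by
    ext ω; simp [Set.mem_prod]
  rw [hpre,
    pr_preimage_eq_sum (fun ω => (V ω, Y ω)) (s ×ˢ t) (T1 ×ˢ T2)
      (fun ω => by simp [hT1, hT2, Finset.mem_product]),
    pr_preimage_eq_sum V s T1 (fun ω => by simp [hT1]),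
    pr_preimage_eq_sum Y t T2 (fun ω => by simp [hT2]),
    Finset.sum_mul_sum, Finset.sum_product]
  refine Finset.sum_congr rfl fun v _ => Finset.sum_congr rfl fun y _ => ?_
  have hvy : {ω | (V ω, Y ω) = (v, y)} = {ω | V ω = v ∧ Y ω = y} := by
    ext ω; simp [Prod.ext_iff]
  by_cases hv : v ∈ s <;> by_cases hy : y ∈ t <;>
    simp [hv, hy, Set.mem_prod, hvy, h v y]

lemma card_cylinder {K : ℕ} {γ : Type*} [Fintype γ] (P : Fin K → Prop)
    (a : {j // P j} → γ) :
    (Finset.univ.filter (fun w : Fin K → γ => ∀ j (h : P j), w j = a ⟨j, h⟩)).card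
      = Fintype.card γ ^ Fintype.card {j // ¬ P j} := by
  classical
  rw [← Fintype.card_subtype]
  have e : {w : Fin K → γ // ∀ j (h : P j), w j = a ⟨j, h⟩} ≃ ({j // ¬ P j} → γ) :=
    { toFun := fun w j => w.1 j.1
      invFun := fun g => ⟨fun j => if h : P j then a ⟨j, h⟩ else g ⟨j, h⟩,
        fun j h => dif_pos h⟩
      left_inv := fun w => Subtype.ext (funext fun j => by
        by_cases h : P j
        · simp [dif_pos h, w.2 j h]
        · simp [dif_neg h])
      right_inv := fun g => funext fun j => by simp [dif_neg j.2] }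
  rw [Fintype.card_congr e, Fintype.card_fun]

lemma pr_forall_cyl {K : ℕ} {γ : Type*} [Fintype γ] {X : Ω → Fin K → γ} {c : ℝ}
    (hu : ∀ w, pr μ {ω | X ω = w} = c)
    (P : Fin K → Prop) (a : {j // P j} → γ) :
    pr μ {ω | ∀ j (h : P j), X ω j = a ⟨j, h⟩}
      = c * (Fintype.card γ : ℝ) ^ Fintype.card {j // ¬ P j} := by
  classical
  have hpre : {ω | ∀ j (h : P j), X ω j = a ⟨j, h⟩}
      = X ⁻¹' {w | ∀ j (h : P j), w j = a ⟨j, h⟩} := rfl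
  rw [hpre, pr_preimage_eq_sum X _ Finset.univ (fun ω => Finset.mem_univ _)]
  simp only [Set.mem_setOf_eq, hu]
  rw [← Finset.sum_filter, Finset.sum_const, card_cylinder P a, nsmul_eq_mul]
  push_cast
  ring

lemma cyl_arith {c d : ℝ} {m12 m1 m2 Kn : ℕ} (hdne : d ≠ 0) (hc : c = (1 / d) ^ Kn)
    (hm : m12 + Kn = m1 + m2) : c * d ^ m12 = (c * d ^ m1) * (c * d ^ m2) := by
  have key : d ^ m12 * d ^ Kn = d ^ m1 * d ^ m2 := by
    rw [← pow_add, ← pow_add, hm]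
  have hcdK : c * d ^ Kn = 1 := by
    rw [hc, one_div, inv_pow, inv_mul_cancel₀ (pow_ne_zero _ hdne)]
  calc c * d ^ m12
      = c * d ^ m12 * (c * d ^ Kn) := by rw [hcdK, mul_one]
    _ = c * c * (d ^ m12 * d ^ Kn) := by ring
    _ = c * c * (d ^ m1 * d ^ m2) := by rw [key]
    _ = c * d ^ m1 * (c * d ^ m2) := by ring

lemma pr_cyl_mul {K : ℕ} {γ : Type*} [Fintype γ] {X : Ω → Fin K → γ} {c : ℝ}
    (hu : ∀ w, pr μ {ω | X ω = w} = c)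
    (hc : c = (1 / (Fintype.card γ : ℝ)) ^ K) (hγ : 0 < Fintype.card γ)
    (P1 P2 : Fin K → Prop) (hdisj : ∀ j, ¬ (P1 j ∧ P2 j))
    (a : {j // P1 j} → γ) (b : {j // P2 j} → γ) :
    pr μ {ω | (∀ j (h : P1 j), X ω j = a ⟨j, h⟩) ∧ (∀ j (h : P2 j), X ω j = b ⟨j, h⟩)}
      = pr μ {ω | ∀ j (h : P1 j), X ω j = a ⟨j, h⟩}
        * pr μ {ω | ∀ j (h : P2 j), X ω j = b ⟨j, h⟩} := by
  classical
  set P : Fin K → Prop := fun j => P1 j ∨ P2 j with hP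
  set ab : {j // P j} → γ := fun j =>
    if h : P1 j.1 then a ⟨j.1, h⟩ else b ⟨j.1, j.2.resolve_left h⟩ with hab
  have hset : {ω | (∀ j (h : P1 j), X ω j = a ⟨j, h⟩) ∧ (∀ j (h : P2 j), X ω j = b ⟨j, h⟩)}
      = {ω | ∀ j (h : P j), X ω j = ab ⟨j, h⟩} := by
    ext ω
    simp only [Set.mem_setOf_eq]
    constructor
    · rintro ⟨h1, h2⟩ j hj
      by_cases hp1 : P1 j
      · have e : ab ⟨j, hj⟩ = a ⟨j, hp1⟩ := dif_pos hp1
        rw [e]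
        exact h1 j hp1
      · have e : ab ⟨j, hj⟩ = b ⟨j, hj.resolve_left hp1⟩ := dif_neg hp1
        rw [e]
        exact h2 j (hj.resolve_left hp1)
    · intro h
      constructor
      · intro j hj
        have e : ab ⟨j, Or.inl hj⟩ = a ⟨j, hj⟩ := dif_pos hj
        have := h j (Or.inl hj)
        rwa [e] at this
      · intro j hj
        have hp1 : ¬ P1 j := fun hp1 => hdisj j ⟨hp1, hj⟩
        have e : ab ⟨j, Or.inr hj⟩ = b ⟨j, (Or.inr hj : P j).resolve_left hp1⟩ := dif_neg hp1
        have := h j (Or.inr hj)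
        rw [e] at this
        convert this
  -- cardinal bookkeeping
  have hd : Disjoint P1 P2 := Pi.disjoint_iff.mpr fun j => Prop.disjoint_iff.mpr (hdisj j)
  have hcard : Fintype.card {j // ¬ P j} + K
      = Fintype.card {j // ¬ P1 j} + Fintype.card {j // ¬ P2 j} := by
    have hor : Fintype.card {j // P j}
        = Fintype.card {j // P1 j} + Fintype.card {j // P2 j} :=
      Fintype.card_subtype_or_disjoint P1 P2 hd
    have c1 := Fintype.card_subtype_compl P
    have c2 := Fintype.card_subtype_compl P1
    have c3 := Fintype.card_subtype_compl P2
    have l1 := Fintype.card_subtype_le P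
    have l2 := Fintype.card_subtype_le P1
    have l3 := Fintype.card_subtype_le P2
    simp only [Fintype.card_fin] at c1 c2 c3 l1 l2 l3
    omega
  rw [hset, pr_forall_cyl hu P ab, pr_forall_cyl hu P1 a, pr_forall_cyl hu P2 b]
  refine cyl_arith (by exact_mod_cast Nat.pos_iff_ne_zero.mp hγ) hc ?_
  convert hcard using 2
  exact congrArg (fun i => @Fintype.card _ i) (Subsingleton.elim _ _)

end Aux

/-- **Lemma 1.** For any subsets `𝒥, 𝒦 ⊆ [K]`, any server `n` and any message indices
`k, k'`, the conditional entropies of the answers agree: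
`H(Aₙ^[k] | W_𝒥, R_𝒦, Qₙ^[k]) = H(Aₙ^[k'] | W_𝒥, R_𝒦, Qₙ^[k'])`. -/
theorem answers_independent_of_index
    {q N K L : ℕ} {F : Type} [Field F] [Fintype F] {Ω : Type} [Fintype Ω]
    (hN : 3 ≤ N) (hK : 2 ≤ K) (hL : 1 ≤ L)
    (S : Scheme q N K L F Ω) :
    ∀ (J Kc : Set (Fin K)) (n : Fin N) (k k' : Fin K),
      condEnt q S.μ (S.A n k)
        (fun ω => (fun j : J => S.W j ω, fun m : Kc => S.R m ω, S.Q n k ω))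
      = condEnt q S.μ (S.A n k')
        (fun ω => (fun j : J => S.W j ω, fun m : Kc => S.R m ω, S.Q n k' ω)) := by
  intro J Kc n k k'
  classical
  have hq : 1 < q := by
    have h := Fintype.one_lt_card (α := F)
    rwa [S.card_F] at h
  have hqR : 1 < (q : ℝ) := by exact_mod_cast hq
  have hμ := S.μ_nonneg
  have hsum := S.μ_sum
  -- abbreviations
  set V : Ω → S.UT × ({j : Fin K // S.e1 j = n ∨ S.e2 j = n} → (Fin L → F))
      × ({j : Fin K // S.e1 j = n ∨ S.e2 j = n} → S.RT) :=
    fun ω => (S.U ω, fun j => S.W j ω, fun j => S.R j ω) with hV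
  set Y : Ω → ({j : Fin K // j ∈ J ∧ ¬(S.e1 j = n ∨ S.e2 j = n)} → (Fin L → F))
      × ({m : Fin K // m ∈ Kc ∧ ¬(S.e1 m = n ∨ S.e2 m = n)} → S.RT) :=
    fun ω => (fun j => S.W j ω, fun m => S.R m ω) with hY
  -- card facts
  have hcardγ : Fintype.card (Fin L → F) = q ^ L := by
    rw [Fintype.card_fun, S.card_F, Fintype.card_fin]
  have hγpos : 0 < Fintype.card (Fin L → F) := Fintype.card_pos
  have hu : ∀ w : Fin K → Fin L → F,
      pr S.μ {ω | (fun kk => S.W kk ω) = w} = (1 / (q : ℝ) ^ L) ^ K := S.W_unif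
  have hc : ((1 / (q : ℝ) ^ L) ^ K : ℝ)
      = (1 / (Fintype.card (Fin L → F) : ℝ)) ^ K := by
    rw [hcardγ]; push_cast; ring
  -- three-way factorization from U_indep and R_indep
  have hfac : ∀ (sU : Set S.UT) (tW : Set (Fin K → Fin L → F)) (sR : Fin K → Set S.RT),
      pr S.μ {ω | S.U ω ∈ sU ∧ (fun kk => S.W kk ω) ∈ tW ∧ ∀ kk, S.R kk ω ∈ sR kk}
        = pr S.μ {ω | S.U ω ∈ sU} * (pr S.μ {ω | (fun kk => S.W kk ω) ∈ tW}
            * ∏ kk, pr S.μ {ω | S.R kk ω ∈ sR kk}) := by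
    intro sU tW sR
    have h1 := S.U_indep sU
      {p : (Fin K → Fin L → F) × (Fin K → S.RT) | p.1 ∈ tW ∧ ∀ kk, p.2 kk ∈ sR kk}
    have h2 := S.R_indep sR tW
    have e1 : S.U ⁻¹' sU ∩ (fun ω => (fun kk => S.W kk ω, fun kk => S.R kk ω)) ⁻¹'
        {p : (Fin K → Fin L → F) × (Fin K → S.RT) | p.1 ∈ tW ∧ ∀ kk, p.2 kk ∈ sR kk}
        = {ω | S.U ω ∈ sU ∧ (fun kk => S.W kk ω) ∈ tW ∧ ∀ kk, S.R kk ω ∈ sR kk} := rfl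
    have e2 : (fun ω => (fun kk => S.W kk ω, fun kk => S.R kk ω)) ⁻¹'
        {p : (Fin K → Fin L → F) × (Fin K → S.RT) | p.1 ∈ tW ∧ ∀ kk, p.2 kk ∈ sR kk}
        = {ω | (fun kk => S.W kk ω) ∈ tW ∧ ∀ kk, S.R kk ω ∈ sR kk} := rfl
    have e3 : S.U ⁻¹' sU = {ω | S.U ω ∈ sU} := rfl
    rw [← e1, h1, e2, h2, e3]
  have hRuniv : ∀ kk : Fin K, pr S.μ {ω | S.R kk ω ∈ (Set.univ : Set S.RT)} = 1 := by
    intro kk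
    have e : {ω | S.R kk ω ∈ (Set.univ : Set S.RT)} = Set.univ := by ext ω; simp
    rw [e, pr_univ hsum]
  have hUuniv : pr S.μ {ω | S.U ω ∈ (Set.univ : Set S.UT)} = 1 := by
    have e : {ω | S.U ω ∈ (Set.univ : Set S.UT)} = Set.univ := by ext ω; simp
    rw [e, pr_univ hsum]
  -- pointwise independence of V and Y
  have hVY : ∀ v y, pr S.μ {ω | V ω = v ∧ Y ω = y}
      = pr S.μ {ω | V ω = v} * pr S.μ {ω | Y ω = y} := by
    rintro ⟨u, wn, rn⟩ ⟨wo, ro⟩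
    set sR1 : Fin K → Set S.RT := fun kk =>
      if h : S.e1 kk = n ∨ S.e2 kk = n then {rn ⟨kk, h⟩} else Set.univ with hsR1
    set sR2 : Fin K → Set S.RT := fun kk =>
      if h : kk ∈ Kc ∧ ¬(S.e1 kk = n ∨ S.e2 kk = n) then {ro ⟨kk, h⟩} else Set.univ
      with hsR2
    set tW1 : Set (Fin K → Fin L → F) :=
      {w | ∀ j (h : S.e1 j = n ∨ S.e2 j = n), w j = wn ⟨j, h⟩} with htW1
    set tW2 : Set (Fin K → Fin L → F) :=
      {w | ∀ j (h : j ∈ J ∧ ¬(S.e1 j = n ∨ S.e2 j = n)), w j = wo ⟨j, h⟩} with htW2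
    set tW12 : Set (Fin K → Fin L → F) :=
      {w | (∀ j (h : S.e1 j = n ∨ S.e2 j = n), w j = wn ⟨j, h⟩)
        ∧ (∀ j (h : j ∈ J ∧ ¬(S.e1 j = n ∨ S.e2 j = n)), w j = wo ⟨j, h⟩)} with htW12
    -- event identities
    have eJoint : {ω | V ω = (u, wn, rn) ∧ Y ω = (wo, ro)}
        = {ω | S.U ω ∈ ({u} : Set S.UT) ∧ (fun kk => S.W kk ω) ∈ tW12
            ∧ ∀ kk, S.R kk ω ∈ sR1 kk ∩ sR2 kk} := by
      ext ω
      simp only [hV, hY, htW12, Set.mem_setOf_eq, Prod.mk.injEq, funext_iff,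
        Subtype.forall, Set.mem_singleton_iff, Set.mem_inter_iff]
      constructor
      · rintro ⟨⟨hU, hW, hR⟩, hWo, hRo⟩
        refine ⟨hU, ⟨fun j hj => hW j hj, fun j hj => hWo j hj⟩, fun kk => ?_⟩
        constructor
        · by_cases h : S.e1 kk = n ∨ S.e2 kk = n
          · simp only [hsR1, dif_pos h, Set.mem_singleton_iff]
            exact hR kk h
          · simp only [hsR1, dif_neg h, Set.mem_univ]
        · by_cases h : kk ∈ Kc ∧ ¬(S.e1 kk = n ∨ S.e2 kk = n)
          · simp only [hsR2, dif_pos h, Set.mem_singleton_iff]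
            exact hRo kk h
          · simp only [hsR2, dif_neg h, Set.mem_univ]
      · rintro ⟨hU, ⟨hW, hWo⟩, hR⟩
        refine ⟨⟨hU, fun j hj => hW j hj, fun j hj => ?_⟩, fun j hj => hWo j hj,
          fun j hj => ?_⟩
        · have h := (hR j).1
          simpa only [hsR1, dif_pos hj, Set.mem_singleton_iff] using h
        · have h := (hR j).2
          simpa only [hsR2, dif_pos hj, Set.mem_singleton_iff] using h
    have eV : {ω | V ω = (u, wn, rn)}
        = {ω | S.U ω ∈ ({u} : Set S.UT) ∧ (fun kk => S.W kk ω) ∈ tW1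
            ∧ ∀ kk, S.R kk ω ∈ sR1 kk} := by
      ext ω
      simp only [hV, htW1, Set.mem_setOf_eq, Prod.mk.injEq, funext_iff,
        Subtype.forall, Set.mem_singleton_iff]
      constructor
      · rintro ⟨hU, hW, hR⟩
        refine ⟨hU, fun j hj => hW j hj, fun kk => ?_⟩
        by_cases h : S.e1 kk = n ∨ S.e2 kk = n
        · simp only [hsR1, dif_pos h, Set.mem_singleton_iff]
          exact hR kk h
        · simp only [hsR1, dif_neg h, Set.mem_univ]
      · rintro ⟨hU, hW, hR⟩
        refine ⟨hU, fun j hj => hW j hj, fun j hj => ?_⟩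
        have h := hR j
        simpa only [hsR1, dif_pos hj, Set.mem_singleton_iff] using h
    have eY : {ω | Y ω = (wo, ro)}
        = {ω | S.U ω ∈ (Set.univ : Set S.UT) ∧ (fun kk => S.W kk ω) ∈ tW2
            ∧ ∀ kk, S.R kk ω ∈ sR2 kk} := by
      ext ω
      simp only [hY, htW2, Set.mem_setOf_eq, Prod.mk.injEq, funext_iff,
        Subtype.forall, Set.mem_univ, true_and]
      constructor
      · rintro ⟨hWo, hRo⟩
        refine ⟨fun j hj => hWo j hj, fun kk => ?_⟩
        by_cases h : kk ∈ Kc ∧ ¬(S.e1 kk = n ∨ S.e2 kk = n)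
        · simp only [hsR2, dif_pos h, Set.mem_singleton_iff]
          exact hRo kk h
        · simp only [hsR2, dif_neg h, Set.mem_univ]
      · rintro ⟨hWo, hRo⟩
        refine ⟨fun j hj => hWo j hj, fun j hj => ?_⟩
        have h := hRo j
        simpa only [hsR2, dif_pos hj, Set.mem_singleton_iff] using h
    rw [eJoint, eV, eY, hfac, hfac, hfac, hUuniv]
    -- split the W factor
    have hW12 : pr S.μ {ω | (fun kk => S.W kk ω) ∈ tW12}
        = pr S.μ {ω | (fun kk => S.W kk ω) ∈ tW1}
          * pr S.μ {ω | (fun kk => S.W kk ω) ∈ tW2} := by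
      have e12 : {ω | (fun kk => S.W kk ω) ∈ tW12}
          = {ω | (∀ j (h : S.e1 j = n ∨ S.e2 j = n), S.W j ω = wn ⟨j, h⟩)
              ∧ (∀ j (h : j ∈ J ∧ ¬(S.e1 j = n ∨ S.e2 j = n)), S.W j ω = wo ⟨j, h⟩)} :=
        rfl
      have e1' : {ω | (fun kk => S.W kk ω) ∈ tW1}
          = {ω | ∀ j (h : S.e1 j = n ∨ S.e2 j = n), S.W j ω = wn ⟨j, h⟩} := rfl
      have e2' : {ω | (fun kk => S.W kk ω) ∈ tW2}
          = {ω | ∀ j (h : j ∈ J ∧ ¬(S.e1 j = n ∨ S.e2 j = n)), S.W j ω = wo ⟨j, h⟩} :=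
        rfl
      rw [e12, e1', e2']
      exact pr_cyl_mul (X := fun ω kk => S.W kk ω) hu hc hγpos
        (fun j => S.e1 j = n ∨ S.e2 j = n)
        (fun j => j ∈ J ∧ ¬(S.e1 j = n ∨ S.e2 j = n))
        (fun j h => h.2.2 h.1) wn wo
    -- split the R factors
    have hRsplit : ∀ kk : Fin K, pr S.μ {ω | S.R kk ω ∈ sR1 kk ∩ sR2 kk}
        = pr S.μ {ω | S.R kk ω ∈ sR1 kk} * pr S.μ {ω | S.R kk ω ∈ sR2 kk} := by
      intro kk
      by_cases h1 : S.e1 kk = n ∨ S.e2 kk = n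
      · have h2 : ¬(kk ∈ Kc ∧ ¬(S.e1 kk = n ∨ S.e2 kk = n)) := fun h => h.2 h1
        have e1 : sR2 kk = Set.univ := dif_neg h2
        rw [e1, Set.inter_univ, hRuniv kk, mul_one]
      · have e1 : sR1 kk = Set.univ := dif_neg h1
        rw [e1, Set.univ_inter, hRuniv kk, one_mul]
    have hRprod : ∏ kk, pr S.μ {ω | S.R kk ω ∈ sR1 kk ∩ sR2 kk}
        = (∏ kk, pr S.μ {ω | S.R kk ω ∈ sR1 kk})
          * ∏ kk, pr S.μ {ω | S.R kk ω ∈ sR2 kk} := by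
      rw [← Finset.prod_mul_distrib]
      exact Finset.prod_congr rfl fun kk _ => hRsplit kk
    rw [hW12, hRprod]
    ring
  have hindVY : IndepRV S.μ V Y := indepRV_of_pmf hVY
  -- determinism of queries and answers on the support
  have hQdet := det_of_condEnt_zero hqR hμ (S.query_det (q := q) k)
  have hQdet' := det_of_condEnt_zero hqR hμ (S.query_det (q := q) k')
  have hAdet := det_of_condEnt_zero hqR hμ (S.answer_det (q := q) n k)
  have hAdet' := det_of_condEnt_zero hqR hμ (S.answer_det (q := q) n k')
  -- the tuple from user privacy
  set X1 : Ω → S.QT × S.AT × ({j : Fin K // S.e1 j = n ∨ S.e2 j = n} → (Fin L → F))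
      × ({j : Fin K // S.e1 j = n ∨ S.e2 j = n} → S.RT) :=
    fun ω => (S.Q n k ω, S.A n k ω, fun j => S.W j ω, fun j => S.R j ω) with hX1
  set X2 : Ω → S.QT × S.AT × ({j : Fin K // S.e1 j = n ∨ S.e2 j = n} → (Fin L → F))
      × ({j : Fin K // S.e1 j = n ∨ S.e2 j = n} → S.RT) :=
    fun ω => (S.Q n k' ω, S.A n k' ω, fun j => S.W j ω, fun j => S.R j ω) with hX2
  have hdet1 : ∀ ω ω', 0 < S.μ ω → 0 < S.μ ω' → V ω = V ω' → X1 ω = X1 ω' := by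
    intro ω ω' hω hω' hVeq
    have hU : S.U ω = S.U ω' := congrArg Prod.fst hVeq
    have hWn : (fun j : {j : Fin K // S.e1 j = n ∨ S.e2 j = n} => S.W j ω)
        = (fun j : {j : Fin K // S.e1 j = n ∨ S.e2 j = n} => S.W j ω') :=
      congrArg (fun p => p.2.1) hVeq
    have hRn : (fun j : {j : Fin K // S.e1 j = n ∨ S.e2 j = n} => S.R j ω)
        = (fun j : {j : Fin K // S.e1 j = n ∨ S.e2 j = n} => S.R j ω') :=
      congrArg (fun p => p.2.2) hVeq
    have hQ : S.Q n k ω = S.Q n k ω' := congrFun (hQdet ω ω' hω hω' hU) n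
    have hA : S.A n k ω = S.A n k ω' := by
      refine hAdet ω ω' hω hω' ?_
      simp only [Prod.mk.injEq]
      exact ⟨hQ, hWn, hRn⟩
    simp only [hX1, Prod.mk.injEq]
    exact ⟨hQ, hA, hWn, hRn⟩
  have hdet2 : ∀ ω ω', 0 < S.μ ω → 0 < S.μ ω' → V ω = V ω' → X2 ω = X2 ω' := by
    intro ω ω' hω hω' hVeq
    have hU : S.U ω = S.U ω' := congrArg Prod.fst hVeq
    have hWn : (fun j : {j : Fin K // S.e1 j = n ∨ S.e2 j = n} => S.W j ω)
        = (fun j : {j : Fin K // S.e1 j = n ∨ S.e2 j = n} => S.W j ω') :=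
      congrArg (fun p => p.2.1) hVeq
    have hRn : (fun j : {j : Fin K // S.e1 j = n ∨ S.e2 j = n} => S.R j ω)
        = (fun j : {j : Fin K // S.e1 j = n ∨ S.e2 j = n} => S.R j ω') :=
      congrArg (fun p => p.2.2) hVeq
    have hQ : S.Q n k' ω = S.Q n k' ω' := congrFun (hQdet' ω ω' hω hω' hU) n
    have hA : S.A n k' ω = S.A n k' ω' := by
      refine hAdet' ω ω' hω hω' ?_
      simp only [Prod.mk.injEq]
      exact ⟨hQ, hWn, hRn⟩
    simp only [hX2, Prod.mk.injEq]
    exact ⟨hQ, hA, hWn, hRn⟩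
  have hind1 : IndepRV S.μ X1 Y := indepRV_of_det hμ hsum hindVY hdet1
  have hind2 : IndepRV S.μ X2 Y := indepRV_of_det hμ hsum hindVY hdet2
  -- user privacy gives equality of the X-marginals
  have hup := identDist_iff_pmf.mp (S.user_privacy n k k')
  -- identical joint distribution of (X, Y)
  have hpair : IdentDist S.μ (fun ω => (X1 ω, Y ω)) (fun ω => (X2 ω, Y ω)) := by
    refine identDist_iff_pmf.mpr fun z => ?_
    obtain ⟨x, y⟩ := z
    have e1 : {ω | (X1 ω, Y ω) = (x, y)} = X1 ⁻¹' {x} ∩ Y ⁻¹' {y} := by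
      ext ω; simp [Prod.ext_iff]
    have e2 : {ω | (X2 ω, Y ω) = (x, y)} = X2 ⁻¹' {x} ∩ Y ⁻¹' {y} := by
      ext ω; simp [Prod.ext_iff]
    have p1 : pr S.μ (X1 ⁻¹' {x}) = pr S.μ (X2 ⁻¹' {x}) := by
      have e3 : X1 ⁻¹' {x} = {ω | X1 ω = x} := by ext ω; simp
      have e4 : X2 ⁻¹' {x} = {ω | X2 ω = x} := by ext ω; simp
      rw [e3, e4]
      exact hup x
    rw [e1, e2, hind1 {x} {y}, hind2 {x} {y}, p1]
  -- transport along the reconstruction map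
  set f : (S.QT × S.AT × ({j : Fin K // S.e1 j = n ∨ S.e2 j = n} → (Fin L → F))
      × ({j : Fin K // S.e1 j = n ∨ S.e2 j = n} → S.RT))
      × (({j : Fin K // j ∈ J ∧ ¬(S.e1 j = n ∨ S.e2 j = n)} → (Fin L → F))
      × ({m : Fin K // m ∈ Kc ∧ ¬(S.e1 m = n ∨ S.e2 m = n)} → S.RT))
      → S.AT × (J → (Fin L → F)) × (Kc → S.RT) × S.QT :=
    fun p => (p.1.2.1,
      fun j => if h : S.e1 j.1 = n ∨ S.e2 j.1 = n then p.1.2.2.1 ⟨j.1, h⟩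
        else p.2.1 ⟨j.1, ⟨j.2, h⟩⟩,
      fun m => if h : S.e1 m.1 = n ∨ S.e2 m.1 = n then p.1.2.2.2 ⟨m.1, h⟩
        else p.2.2 ⟨m.1, ⟨m.2, h⟩⟩,
      p.1.1) with hf
  have hcomp1 : (fun ω => f (X1 ω, Y ω))
      = (fun ω => (S.A n k ω,
          ((fun j : J => S.W j ω), (fun m : Kc => S.R m ω), S.Q n k ω))) := by
    funext ω
    simp only [hf, hX1, hY, Prod.mk.injEq, true_and, and_true]
    refine ⟨?_, ?_⟩
    · funext j
      by_cases h : S.e1 j.1 = n ∨ S.e2 j.1 = n <;> simp [h]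
    · funext m
      by_cases h : S.e1 m.1 = n ∨ S.e2 m.1 = n <;> simp [h]
  have hcomp2 : (fun ω => f (X2 ω, Y ω))
      = (fun ω => (S.A n k' ω,
          ((fun j : J => S.W j ω), (fun m : Kc => S.R m ω), S.Q n k' ω))) := by
    funext ω
    simp only [hf, hX2, hY, Prod.mk.injEq, true_and, and_true]
    refine ⟨?_, ?_⟩
    · funext j
      by_cases h : S.e1 j.1 = n ∨ S.e2 j.1 = n <;> simp [h]
    · funext m
      by_cases h : S.e1 m.1 = n ∨ S.e2 m.1 = n <;> simp [h]
  have hfinal := identDist_comp hpair f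
  rw [hcomp1, hcomp2] at hfinal
  exact condEnt_congr q hfinal

end SPIR
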